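/- Let f^{(r)} be the determinant of the r×r sub-Hankel matrix in x_0,...,x_r (entry (i,j) equal to x_{i+j} if i+j ≤ r, else 0), with r ≥ 2. Then for 0 ≤ i ≤ r-1, the partial derivatives ∂f^{(r)}/∂x_0, ..., ∂f^{(r)}/∂x_i lie in the subring k[x_{r-i},...,x_r], and their greatest common divisor is x_r^{r-i-1}. -/

import Mathlib

open MvPolynomial
open Fin.NatCast

/-- The `r × r` generic sub-Hankel matrix in the variables `x_0,…,x_r`:
entry `(i,j)` is `x_{i+j}` if `i + j ≤ r` and `0` otherwise. -/
noncomputable def subHankel (k : Type*) [CommRing k] (r : ℕ) :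
    Matrix (Fin r) (Fin r) (MvPolynomial (Fin (r + 1)) k) :=
  Matrix.of fun i j =>
    if h : (i : ℕ) + (j : ℕ) ≤ r then MvPolynomial.X ⟨(i : ℕ) + (j : ℕ), Nat.lt_succ_of_le h⟩
    else 0

/-- The sub-Hankel determinant `f^{(r)}`. -/
noncomputable def subHankelDet (k : Type*) [CommRing k] (r : ℕ) :
    MvPolynomial (Fin (r + 1)) k :=
  (subHankel k r).det

namespace SubHankelAux

variable {k : Type*} [CommRing k] {τ : Type*} [DecidableEq τ]

lemma prod_X_eq_monomial {ι : Type*} (s : Finset ι) (c : ι → τ) :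
    (∏ x ∈ s, (X (c x) : MvPolynomial τ k)) =
      monomial (∑ x ∈ s, Finsupp.single (c x) 1) 1 := by
  classical
  induction s using Finset.induction_on with
  | empty => simp [monomial_zero', C_1]
  | @insert a s ha ih =>
      rw [Finset.prod_insert ha, ih, Finset.sum_insert ha]
      have hX : (X (c a) : MvPolynomial τ k) = monomial (Finsupp.single (c a) 1) 1 := rfl
      rw [hX, monomial_mul, one_mul]

lemma coeff_pderiv_aux_monomial_ne {j : τ} {m d : τ →₀ ℕ} {a : k}
    (hd : ¬d = m + Finsupp.single j 1) :
    coeff m (monomial (d - Finsupp.single j 1) (a * (d j : k))) = 0 := by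
  by_cases h0 : d j = 0
  · simp [h0]
  · have hle : Finsupp.single j 1 ≤ d := by
      rw [Finsupp.single_le_iff]; omega
    have hne : ¬(d - Finsupp.single j 1 = m) := by
      intro hcon
      apply hd
      rw [← tsub_add_cancel_of_le hle, hcon]
    rw [coeff_monomial, if_neg hne]

lemma coeff_pderiv (j : τ) (p : MvPolynomial τ k) (m : τ →₀ ℕ) :
    coeff m (pderiv j p) = ((m j + 1 : ℕ) : k) * coeff (m + Finsupp.single j 1) p := by
  induction p using MvPolynomial.induction_on' with
  | monomial d a =>
      rw [pderiv_monomial]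
      by_cases hd : d = m + Finsupp.single j 1
      · subst hd
        have h1 : (m + Finsupp.single j 1) - Finsupp.single j 1 = m := by
          ext t
          rw [Finsupp.tsub_apply, Finsupp.add_apply]
          simp [Finsupp.single_apply]
        have h2 : ((m + Finsupp.single j 1 : τ →₀ ℕ)) j = m j + 1 := by
          rw [Finsupp.add_apply, Finsupp.single_apply, if_pos rfl]
        rw [h1, h2, coeff_monomial, coeff_monomial, if_pos rfl, if_pos rfl]
        push_cast; ring
      · rw [coeff_pderiv_aux_monomial_ne hd]
        rw [coeff_monomial, if_neg hd, mul_zero]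
  | add p q hp hq => simp [map_add, hp, hq, mul_add]

lemma monomial_one_dvd_iff {s : τ →₀ ℕ} {p : MvPolynomial τ k} :
    monomial s (1 : k) ∣ p ↔ ∀ m ∈ p.support, s ≤ m := by
  constructor
  · rintro ⟨q, rfl⟩ m hm
    by_contra hle
    have h := coeff_monomial_mul' m s (1 : k) q
    rw [if_neg hle] at h
    exact mem_support_iff.mp hm h
  · intro h
    rw [MvPolynomial.monomial_one_dvd_iff_modMonomial_eq_zero]
    rw [MvPolynomial.eq_zero_iff]
    intro d
    by_cases hd : s ≤ d
    · rw [MvPolynomial.coeff_modMonomial_of_le _ hd]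
    · rw [MvPolynomial.coeff_modMonomial_of_not_le _ hd]
      by_contra hc
      exact hd (h d (mem_support_iff.mpr hc))

lemma eq_monomial_of_support_subset {p : MvPolynomial τ k} {m₀ : τ →₀ ℕ}
    (h : p.support ⊆ {m₀}) : p = monomial m₀ (coeff m₀ p) := by
  ext d
  rw [coeff_monomial]
  split_ifs with hd
  · rw [hd]
  · by_contra hc
    have : d ∈ p.support := mem_support_iff.mpr hc
    have := h this
    simp only [Finset.mem_singleton] at this
    exact hd this.symm


section Det

variable {r : ℕ}

/-- the variable hit by row `σ x`, column `x` (truncated). -/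
def vv (σ : Equiv.Perm (Fin r)) (x : Fin r) : Fin (r + 1) :=
  ⟨min ((σ x : ℕ) + (x : ℕ)) r, by omega⟩

/-- exponent vector of the Leibniz term of `σ`. -/
noncomputable def Dex (σ : Equiv.Perm (Fin r)) : Fin (r + 1) →₀ ℕ :=
  ∑ x : Fin r, Finsupp.single (vv σ x) 1

lemma vv_val {σ : Equiv.Perm (Fin r)} {x : Fin r} (h : (σ x : ℕ) + (x : ℕ) ≤ r) :
    (vv σ x : ℕ) = (σ x : ℕ) + (x : ℕ) := by
  simp [vv, min_eq_left h]

lemma term_eq (σ : Equiv.Perm (Fin r)) (h : ∀ x : Fin r, (σ x : ℕ) + (x : ℕ) ≤ r) :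
    (∏ x : Fin r, subHankel k r (σ x) x) = monomial (Dex σ) 1 := by
  rw [show (∏ x : Fin r, subHankel k r (σ x) x) = ∏ x : Fin r, X (vv σ x) from
    Finset.prod_congr rfl fun x _ => by
      simp only [subHankel, Matrix.of_apply]
      rw [dif_pos (h x)]
      congr 1
      exact Fin.ext (vv_val (h x)).symm]
  rw [prod_X_eq_monomial, Dex]

lemma term_eq_zero (σ : Equiv.Perm (Fin r)) (h : ¬ ∀ x : Fin r, (σ x : ℕ) + (x : ℕ) ≤ r) :
    (∏ x : Fin r, subHankel k r (σ x) x) = 0 := by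
  push_neg at h
  obtain ⟨x, hx⟩ := h
  apply Finset.prod_eq_zero (Finset.mem_univ x)
  simp only [subHankel, Matrix.of_apply]
  rw [dif_neg (by omega)]

lemma coeff_det (ν : Fin (r + 1) →₀ ℕ) :
    coeff ν (subHankelDet k r) =
      ∑ σ ∈ Finset.univ.filter
          (fun σ : Equiv.Perm (Fin r) =>
            (∀ x : Fin r, (σ x : ℕ) + (x : ℕ) ≤ r) ∧ Dex σ = ν),
        ((Equiv.Perm.sign σ : ℤ) : k) := by
  classical
  rw [subHankelDet, Matrix.det_apply, coeff_sum, Finset.sum_filter]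
  refine Finset.sum_congr rfl fun σ _ => ?_
  rw [coeff_smul]
  by_cases h1 : ∀ x : Fin r, (σ x : ℕ) + (x : ℕ) ≤ r
  · rw [term_eq σ h1, coeff_monomial]
    by_cases h2 : Dex σ = ν
    · rw [if_pos h2, if_pos ⟨h1, h2⟩]
      simp [Units.smul_def]
    · rw [if_neg h2, if_neg (by tauto), smul_zero]
  · rw [term_eq_zero σ h1, coeff_zero, smul_zero, if_neg (by tauto)]

lemma Dex_weight (σ : Equiv.Perm (Fin r)) (w : Fin (r + 1) → ℕ) :
    (∑ t : Fin (r + 1), w t * (Dex σ) t) = ∑ x : Fin r, w (vv σ x) := by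
  classical
  simp only [Dex, Finsupp.finset_sum_apply, Finset.mul_sum]
  rw [Finset.sum_comm]
  refine Finset.sum_congr rfl fun x _ => ?_
  simp only [Finsupp.single_apply, mul_ite, mul_one, mul_zero]
  rw [Finset.sum_ite_eq Finset.univ (vv σ x) w, if_pos (Finset.mem_univ _)]

lemma Dex_apply (σ : Equiv.Perm (Fin r)) (t : Fin (r + 1)) :
    (Dex σ) t = (Finset.univ.filter fun x => vv σ x = t).card := by
  classical
  rw [Finset.card_filter]
  simp only [Dex, Finsupp.finset_sum_apply]
  exact Finset.sum_congr rfl fun x _ => by rw [Finsupp.single_apply]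

lemma exists_perm_of_mem_support {m : Fin (r + 1) →₀ ℕ}
    (hm : m ∈ (subHankelDet k r).support) :
    ∃ σ : Equiv.Perm (Fin r), (∀ x : Fin r, (σ x : ℕ) + (x : ℕ) ≤ r) ∧ Dex σ = m := by
  classical
  have h := mem_support_iff.mp hm
  rw [coeff_det] at h
  obtain ⟨σ, hσ, -⟩ := Finset.exists_ne_zero_of_sum_ne_zero h
  exact ⟨σ, (Finset.mem_filter.mp hσ).2⟩

lemma support_det_weights {m : Fin (r + 1) →₀ ℕ}
    (hm : m ∈ (subHankelDet k r).support) :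
    (∑ t : Fin (r + 1), m t) = r ∧ (∑ t : Fin (r + 1), (r - (t : ℕ)) * m t) = r := by
  obtain ⟨σ, hσ, rfl⟩ := exists_perm_of_mem_support hm
  have hcomp : ∑ x : Fin r, ((σ x : ℕ)) = ∑ x : Fin r, (x : ℕ) :=
    Equiv.sum_comp σ (fun x : Fin r => (x : ℕ))
  have hsum : ∑ x : Fin r, ((σ x : ℕ) + (x : ℕ)) = 2 * ∑ x : Fin r, (x : ℕ) := by
    rw [Finset.sum_add_distrib, hcomp]; ring
  have hgauss : (∑ x : Fin r, (x : ℕ)) * 2 = r * (r - 1) := by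
    rw [Fin.sum_univ_eq_sum_range (fun i => i) r]
    exact Finset.sum_range_id_mul_two r
  have hrr : r * r = r * (r - 1) + r := by
    cases r with
    | zero => simp
    | succ n =>
        have : n + 1 - 1 = n := rfl
        rw [this]; ring
  constructor
  · have h1 : (∑ t : Fin (r + 1), 1 * (Dex σ) t) = ∑ x : Fin r, 1 := Dex_weight σ (fun _ => 1)
    simp only [one_mul] at h1
    rw [h1]
    simp
  · rw [Dex_weight σ (fun t => r - (t : ℕ))]
    have key : ∑ x : Fin r, ((r - (vv σ x : ℕ)) + (vv σ x : ℕ)) = r * r := by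
      rw [Finset.sum_congr rfl fun x _ => Nat.sub_add_cancel (by
        have := (vv σ x).isLt; omega)]
      simp [Finset.card_univ, mul_comm]
    rw [Finset.sum_add_distrib] at key
    have hv : ∑ x : Fin r, (vv σ x : ℕ) = 2 * ∑ x : Fin r, (x : ℕ) := by
      rw [Finset.sum_congr rfl fun x _ => vv_val (hσ x)]
      exact hsum
    omega

end Det


section Sigma

/-- the family of permutations giving the monomial `x_s x_{n}^s x_{n+1}^{n-s}`
(in matrix size `n+1`). -/
noncomputable def sigmaA (n d : ℕ) : ℕ → Equiv.Perm (Fin (n + 1))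
  | 0 => (Fin.cycleRange ((d : ℕ) : Fin (n + 1))).symm.trans Fin.revPerm
  | (a + 1) =>
      sigmaA n d a * Equiv.swap ((a : ℕ) : Fin (n + 1)) (((d + a + 1 : ℕ)) : Fin (n + 1))
        * Equiv.swap ((a : ℕ) : Fin (n + 1)) (((a + 1 : ℕ)) : Fin (n + 1))

lemma sign_sigmaA (n d : ℕ) (hd : 1 ≤ d) :
    ∀ a, d + a ≤ n → Equiv.Perm.sign (sigmaA n d a) = Equiv.Perm.sign (sigmaA n d 0)
  | 0, _ => rfl
  | (a + 1), h => by
      have h1 : ((a : ℕ) : Fin (n + 1)).val = a := Fin.val_cast_of_lt (by omega)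
      have h2 : (((a + 1 : ℕ)) : Fin (n + 1)).val = a + 1 := Fin.val_cast_of_lt (by omega)
      have h3 : (((d + a + 1 : ℕ)) : Fin (n + 1)).val = d + a + 1 := Fin.val_cast_of_lt (by omega)
      have ne1 : ((a : ℕ) : Fin (n + 1)) ≠ (((d + a + 1 : ℕ)) : Fin (n + 1)) := by
        intro hc; rw [Fin.ext_iff, h1, h3] at hc; omega
      have ne2 : ((a : ℕ) : Fin (n + 1)) ≠ (((a + 1 : ℕ)) : Fin (n + 1)) := by
        intro hc; rw [Fin.ext_iff, h1, h2] at hc; omega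
      have hstep : sigmaA n d (a + 1) =
          sigmaA n d a * Equiv.swap ((a : ℕ) : Fin (n + 1)) (((d + a + 1 : ℕ)) : Fin (n + 1))
            * Equiv.swap ((a : ℕ) : Fin (n + 1)) (((a + 1 : ℕ)) : Fin (n + 1)) := rfl
      rw [hstep, map_mul, map_mul, Equiv.Perm.sign_swap ne1, Equiv.Perm.sign_swap ne2,
        sign_sigmaA n d hd a (by omega)]
      rw [mul_assoc]
      simp

lemma sigmaA_zero_apply (n s d : ℕ) (hsd : s + d = n) (x : Fin (n + 1)) :
    ((sigmaA n d 0 x : ℕ)) =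
      if (x : ℕ) = 0 then s else if (x : ℕ) ≤ d then n + 1 - (x : ℕ) else n - (x : ℕ) := by
  have hdval : ((d : ℕ) : Fin (n + 1)).val = d := Fin.val_cast_of_lt (by omega)
  have happ : sigmaA n d 0 x =
      Fin.revPerm ((Fin.cycleRange ((d : ℕ) : Fin (n + 1))).symm x) := rfl
  rcases Nat.eq_zero_or_pos (x : ℕ) with hx0 | hxpos
  · have hx : x = 0 := Fin.ext (by simpa using hx0)
    have hy : (Fin.cycleRange ((d : ℕ) : Fin (n + 1))).symm x = ((d : ℕ) : Fin (n + 1)) := by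
      rw [Equiv.symm_apply_eq, hx]
      exact (Fin.cycleRange_self _).symm
    rw [happ, hy, Fin.revPerm_apply, Fin.val_rev, hdval]
    split_ifs <;> omega
  · have hxlt := x.isLt
    by_cases hxd : (x : ℕ) ≤ d
    · have hy : (Fin.cycleRange ((d : ℕ) : Fin (n + 1))).symm x
          = ⟨(x : ℕ) - 1, by omega⟩ := by
        rw [Equiv.symm_apply_eq]
        have hlt : (⟨(x : ℕ) - 1, by omega⟩ : Fin (n + 1)) < ((d : ℕ) : Fin (n + 1)) := by
          rw [Fin.lt_iff_val_lt_val, hdval]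
          show (x : ℕ) - 1 < d
          omega
        rw [Fin.cycleRange_of_lt hlt]
        apply Fin.ext
        rw [Fin.val_add_one_of_lt (by
          rw [Fin.lt_iff_val_lt_val, Fin.val_last]
          show (x : ℕ) - 1 < n
          omega)]
        show (x : ℕ) = (x : ℕ) - 1 + 1
        omega
      rw [happ, hy, Fin.revPerm_apply, Fin.val_rev]
      simp only [Fin.val_mk]
      split_ifs <;> omega
    · have hy : (Fin.cycleRange ((d : ℕ) : Fin (n + 1))).symm x = x := by
        rw [Equiv.symm_apply_eq]
        exact (Fin.cycleRange_of_gt (by rw [Fin.lt_iff_val_lt_val, hdval]; omega)).symm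
      rw [happ, hy, Fin.revPerm_apply, Fin.val_rev]
      split_ifs <;> omega

lemma sigmaA_apply (n s d : ℕ) (hsd : s + d = n) (hd : 1 ≤ d) :
    ∀ a, a ≤ s → ∀ x : Fin (n + 1),
      ((sigmaA n d a x : ℕ)) =
        if (x : ℕ) < a then n - (x : ℕ)
        else if (x : ℕ) = a then s - a
        else if (x : ℕ) ≤ d + a then n + 1 - (x : ℕ)
        else n - (x : ℕ)
  | 0, _, x => by
      rw [sigmaA_zero_apply n s d hsd x]
      split_ifs <;> omega
  | (a + 1), ha, x => by
      have hdn : d + a + 1 ≤ n := by omega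
      have h1 : ((a : ℕ) : Fin (n + 1)).val = a := Fin.val_cast_of_lt (by omega)
      have h2 : (((a + 1 : ℕ)) : Fin (n + 1)).val = a + 1 := Fin.val_cast_of_lt (by omega)
      have h3 : (((d + a + 1 : ℕ)) : Fin (n + 1)).val = d + a + 1 := Fin.val_cast_of_lt (by omega)
      have IH := sigmaA_apply n s d hsd hd a (by omega)
      have happ : sigmaA n d (a + 1) x =
          sigmaA n d a (Equiv.swap ((a : ℕ) : Fin (n + 1)) (((d + a + 1 : ℕ)) : Fin (n + 1))
            (Equiv.swap ((a : ℕ) : Fin (n + 1)) (((a + 1 : ℕ)) : Fin (n + 1)) x)) := rfl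
      rcases Nat.lt_trichotomy ((x : ℕ)) a with hlt | heq | hgt
      · have e1 : Equiv.swap ((a : ℕ) : Fin (n + 1)) (((a + 1 : ℕ)) : Fin (n + 1)) x = x :=
          Equiv.swap_apply_of_ne_of_ne (by intro hc; rw [hc, h1] at hlt; omega)
            (by intro hc; rw [hc, h2] at hlt; omega)
        have e2 : Equiv.swap ((a : ℕ) : Fin (n + 1)) (((d + a + 1 : ℕ)) : Fin (n + 1)) x = x :=
          Equiv.swap_apply_of_ne_of_ne (by intro hc; rw [hc, h1] at hlt; omega)
            (by intro hc; rw [hc, h3] at hlt; omega)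
        rw [happ, e1, e2, IH x]
        split_ifs <;> omega
      · have hxa : x = ((a : ℕ) : Fin (n + 1)) := Fin.ext (by rw [h1]; exact heq)
        have e1 : Equiv.swap ((a : ℕ) : Fin (n + 1)) (((a + 1 : ℕ)) : Fin (n + 1)) x
            = (((a + 1 : ℕ)) : Fin (n + 1)) := by rw [hxa, Equiv.swap_apply_left]
        have e2 : Equiv.swap ((a : ℕ) : Fin (n + 1)) (((d + a + 1 : ℕ)) : Fin (n + 1))
            (((a + 1 : ℕ)) : Fin (n + 1)) = (((a + 1 : ℕ)) : Fin (n + 1)) :=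
          Equiv.swap_apply_of_ne_of_ne (by intro hc; rw [Fin.ext_iff, h2, h1] at hc; omega)
            (by intro hc; rw [Fin.ext_iff, h2, h3] at hc; omega)
        rw [happ, e1, e2, IH _, h2]
        split_ifs <;> omega
      · rcases Nat.lt_trichotomy ((x : ℕ)) (a + 1) with h' | heq1 | hgt1
        · omega
        · have hxa : x = (((a + 1 : ℕ)) : Fin (n + 1)) := Fin.ext (by rw [h2]; exact heq1)
          have e1 : Equiv.swap ((a : ℕ) : Fin (n + 1)) (((a + 1 : ℕ)) : Fin (n + 1)) x
              = ((a : ℕ) : Fin (n + 1)) := by rw [hxa, Equiv.swap_apply_right]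
          have e2 : Equiv.swap ((a : ℕ) : Fin (n + 1)) (((d + a + 1 : ℕ)) : Fin (n + 1))
              ((a : ℕ) : Fin (n + 1)) = (((d + a + 1 : ℕ)) : Fin (n + 1)) :=
            Equiv.swap_apply_left _ _
          rw [happ, e1, e2, IH _, h3]
          split_ifs <;> omega
        · rcases Nat.lt_trichotomy ((x : ℕ)) (d + a + 1) with h'' | heq2 | hgt2
          · have e1 : Equiv.swap ((a : ℕ) : Fin (n + 1)) (((a + 1 : ℕ)) : Fin (n + 1)) x = x :=
              Equiv.swap_apply_of_ne_of_ne (by intro hc; rw [hc, h1] at hgt1; omega)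
                (by intro hc; rw [hc, h2] at hgt1; omega)
            have e2 : Equiv.swap ((a : ℕ) : Fin (n + 1))
                (((d + a + 1 : ℕ)) : Fin (n + 1)) x = x :=
              Equiv.swap_apply_of_ne_of_ne (by intro hc; rw [hc, h1] at hgt1; omega)
                (by intro hc; rw [hc, h3] at h''; omega)
            rw [happ, e1, e2, IH x]
            split_ifs <;> omega
          · have hxa : x = (((d + a + 1 : ℕ)) : Fin (n + 1)) := Fin.ext (by rw [h3]; exact heq2)
            have e1 : Equiv.swap ((a : ℕ) : Fin (n + 1)) (((a + 1 : ℕ)) : Fin (n + 1)) x = x :=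
              Equiv.swap_apply_of_ne_of_ne
                (by intro hc; rw [hc, h1] at heq2; omega)
                (by intro hc; rw [hc, h2] at heq2; omega)
            have e2 : Equiv.swap ((a : ℕ) : Fin (n + 1)) (((d + a + 1 : ℕ)) : Fin (n + 1)) x
                = ((a : ℕ) : Fin (n + 1)) := by rw [hxa, Equiv.swap_apply_right]
            rw [happ, e1, e2, IH _, h1]
            split_ifs <;> omega
          · have e1 : Equiv.swap ((a : ℕ) : Fin (n + 1)) (((a + 1 : ℕ)) : Fin (n + 1)) x = x :=
              Equiv.swap_apply_of_ne_of_ne (by intro hc; rw [hc, h1] at hgt1; omega)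
                (by intro hc; rw [hc, h2] at hgt1; omega)
            have e2 : Equiv.swap ((a : ℕ) : Fin (n + 1))
                (((d + a + 1 : ℕ)) : Fin (n + 1)) x = x :=
              Equiv.swap_apply_of_ne_of_ne (by intro hc; rw [hc, h1] at hgt1; omega)
                (by intro hc; rw [hc, h3] at hgt2; omega)
            rw [happ, e1, e2, IH x]
            split_ifs <;> omega

end Sigma


section PrimeX

lemma prime_X_fin {k : Type*} [Field k] (N : ℕ) (v : Fin (N + 1)) :
    Prime (X v : MvPolynomial (Fin (N + 1)) k) := by
  classical
  let e₁ : MvPolynomial (Fin (N + 1)) k ≃ₐ[k] MvPolynomial (Fin (N + 1)) k :=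
    MvPolynomial.renameEquiv k (Equiv.swap (0 : Fin (N + 1)) v)
  let e₂ := MvPolynomial.finSuccEquiv k N
  have h1 : e₂ (e₁ (X v)) = Polynomial.X := by
    show e₂ (MvPolynomial.rename (Equiv.swap (0 : Fin (N + 1)) v) (X v)) = Polynomial.X
    rw [rename_X, Equiv.swap_apply_right, finSuccEquiv_X_zero]
  have hp : Prime (e₂ (e₁ (X v))) := by
    rw [h1]
    exact Polynomial.prime_X
  exact (MulEquiv.prime_iff
    (e₁.toRingEquiv.toMulEquiv.trans e₂.toRingEquiv.toMulEquiv)).mp hp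

end PrimeX

section Big

variable {k : Type*} [CommRing k] [CharZero k]

lemma sum_weight_add_single {N : ℕ} (w : Fin N → ℕ) (m : Fin N →₀ ℕ) (j : Fin N) :
    (∑ t : Fin N, w t * ((m + Finsupp.single j 1 : Fin N →₀ ℕ) t))
      = (∑ t : Fin N, w t * m t) + w j := by
  have h1 : (∑ t : Fin N, w t * ((m + Finsupp.single j 1 : Fin N →₀ ℕ) t))
      = ∑ t : Fin N, (w t * m t + w t * (Finsupp.single j 1 : Fin N →₀ ℕ) t) :=
    Finset.sum_congr rfl (fun t _ => by rw [Finsupp.add_apply, Nat.mul_add])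
  have h2 : (∑ t : Fin N, w t * (Finsupp.single j 1 : Fin N →₀ ℕ) t)
      = ∑ t : Fin N, if j = t then w t else 0 :=
    Finset.sum_congr rfl (fun t _ => by
      rw [Finsupp.single_apply, mul_ite, mul_one, mul_zero])
  rw [h1, Finset.sum_add_distrib, h2, Finset.sum_ite_eq Finset.univ j w,
    if_pos (Finset.mem_univ _)]

lemma count_sum (n s d tv : ℕ) (hsd : s + d = n) :
    (∑ j ∈ Finset.range (n + 1),
      if (if j = 0 then s else if j ≤ d then n + 1 else n) = tv then 1 else 0) =
    (if s = tv then 1 else 0) + (if n = tv then s else 0) + (if n + 1 = tv then d else 0) := by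
  have hd : d ≤ n := by omega
  rw [Finset.range_eq_Ico,
    ← Finset.sum_Ico_consecutive _ (show 0 ≤ d + 1 by omega) (show d + 1 ≤ n + 1 by omega),
    ← Finset.sum_Ico_consecutive _ (show 0 ≤ 1 by omega) (show 1 ≤ d + 1 by omega)]
  have c1 : (∑ j ∈ Finset.Ico 0 1,
      if (if j = 0 then s else if j ≤ d then n + 1 else n) = tv then 1 else 0)
      = if s = tv then 1 else 0 := by
    rw [show Finset.Ico 0 1 = {0} from rfl, Finset.sum_singleton]
    simp
  have h2 : ∀ j ∈ Finset.Ico 1 (d + 1),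
      (if (if j = 0 then s else if j ≤ d then n + 1 else n) = tv then 1 else 0)
      = (if n + 1 = tv then 1 else 0) := by
    intro j hj
    rw [Finset.mem_Ico] at hj
    rw [if_neg (show ¬ j = 0 by omega), if_pos (show j ≤ d by omega)]
  have c2 : (∑ j ∈ Finset.Ico 1 (d + 1),
      if (if j = 0 then s else if j ≤ d then n + 1 else n) = tv then 1 else 0)
      = d * (if n + 1 = tv then 1 else 0) := by
    rw [Finset.sum_congr rfl h2, Finset.sum_const, Nat.card_Ico, smul_eq_mul]
    congr 1
  have h3 : ∀ j ∈ Finset.Ico (d + 1) (n + 1),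
      (if (if j = 0 then s else if j ≤ d then n + 1 else n) = tv then 1 else 0)
      = (if n = tv then 1 else 0) := by
    intro j hj
    rw [Finset.mem_Ico] at hj
    rw [if_neg (show ¬ j = 0 by omega), if_neg (show ¬ j ≤ d by omega)]
  have c3 : (∑ j ∈ Finset.Ico (d + 1) (n + 1),
      if (if j = 0 then s else if j ≤ d then n + 1 else n) = tv then 1 else 0)
      = s * (if n = tv then 1 else 0) := by
    rw [Finset.sum_congr rfl h3, Finset.sum_const, Nat.card_Ico, smul_eq_mul]
    congr 1
    omega
  rw [c1, c2, c3]
  split_ifs <;> omega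

lemma coeff_nu_ne_zero (n s : ℕ) (hs : s ≤ n) :
    coeff (Finsupp.single (⟨s, by omega⟩ : Fin (n + 2)) 1 +
        Finsupp.single (⟨n, by omega⟩ : Fin (n + 2)) s +
        Finsupp.single (⟨n + 1, by omega⟩ : Fin (n + 2)) (n - s))
      (subHankelDet k (n + 1)) ≠ 0 := by
  classical
  set p1 : Fin (n + 2) := ⟨s, by omega⟩ with hp1
  set p2 : Fin (n + 2) := ⟨n, by omega⟩ with hp2
  set p3 : Fin (n + 2) := ⟨n + 1, by omega⟩ with hp3
  set ν : Fin (n + 2) →₀ ℕ :=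
    Finsupp.single p1 1 + Finsupp.single p2 s + Finsupp.single p3 (n - s) with hν
  have hνval : ∀ t : Fin (n + 2), ν t =
      (if s = (t : ℕ) then 1 else 0) + (if n = (t : ℕ) then s else 0) +
        (if n + 1 = (t : ℕ) then n - s else 0) := by
    intro t
    rw [hν, Finsupp.add_apply, Finsupp.add_apply, Finsupp.single_apply, Finsupp.single_apply,
      Finsupp.single_apply]
    have e1 : (p1 = t) = (s = (t : ℕ)) := propext ⟨fun h => by rw [← h], fun h => Fin.ext h⟩
    have e2 : (p2 = t) = (n = (t : ℕ)) := propext ⟨fun h => by rw [← h], fun h => Fin.ext h⟩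
    have e3 : (p3 = t) = (n + 1 = (t : ℕ)) :=
      propext ⟨fun h => by rw [← h], fun h => Fin.ext h⟩
    simp only [e1, e2, e3]
  rw [coeff_det]
  set S := Finset.univ.filter
    (fun σ : Equiv.Perm (Fin (n + 1)) =>
      (∀ x : Fin (n + 1), (σ x : ℕ) + (x : ℕ) ≤ n + 1) ∧ Dex σ = ν) with hS
  suffices h : S.Nonempty ∧ (∃ ε : ℤˣ, ∀ σ ∈ S, Equiv.Perm.sign σ = ε) by
    obtain ⟨⟨σ₀, hσ₀⟩, ⟨ε, hε⟩⟩ := h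
    rw [Finset.sum_congr rfl (fun σ hσ => by rw [hε σ hσ]), Finset.sum_const]
    have hcard : S.card ≠ 0 := Finset.card_ne_zero_of_mem hσ₀
    rcases Int.units_eq_one_or ε with rfl | rfl
    · simp only [Units.val_one, Int.cast_one, nsmul_eq_mul, mul_one]
      exact Nat.cast_ne_zero.mpr hcard
    · simp only [Units.val_neg, Units.val_one, Int.cast_neg, Int.cast_one, nsmul_eq_mul,
        mul_neg, mul_one, ne_eq, neg_eq_zero]
      exact Nat.cast_ne_zero.mpr hcard
  constructor
  · -- Nonemptiness
    by_cases hcase : s = n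
    · refine ⟨Fin.revPerm, Finset.mem_filter.mpr ⟨Finset.mem_univ _, ?_, ?_⟩⟩
      · intro x
        rw [Fin.revPerm_apply, Fin.val_rev]
        omega
      · have hvvrev : ∀ x : Fin (n + 1), vv (Fin.revPerm : Equiv.Perm (Fin (n + 1))) x = p2 := by
          intro x
          apply Fin.ext
          show min ((Fin.revPerm x : ℕ) + (x : ℕ)) (n + 1) = n
          rw [Fin.revPerm_apply, Fin.val_rev]
          have := x.isLt
          omega
        ext t
        rw [Dex_apply, hνval t]
        by_cases ht : p2 = t
        · rw [Finset.filter_true_of_mem (fun x _ => by rw [hvvrev x]; exact ht),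
            Finset.card_univ, Fintype.card_fin]
          have htv : (t : ℕ) = n := by rw [← ht]
          split_ifs <;> omega
        · rw [Finset.filter_false_of_mem (fun x _ => by rw [hvvrev x]; exact ht),
            Finset.card_empty]
          have htv : ¬(n = (t : ℕ)) := fun hc => ht (Fin.ext hc)
          split_ifs <;> omega
    · have hslt : s < n := by omega
      set d := n - s with hdd
      have hsd : s + d = n := by omega
      have hd1 : 1 ≤ d := by omega
      have happly := sigmaA_apply n s d hsd hd1 0 (by omega)
      have hvalid0 : ∀ x : Fin (n + 1), ((sigmaA n d 0) x : ℕ) + (x : ℕ) ≤ n + 1 := by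
        intro x
        have h := happly x
        have := x.isLt
        split_ifs at h <;> omega
      refine ⟨sigmaA n d 0, Finset.mem_filter.mpr ⟨Finset.mem_univ _, hvalid0, ?_⟩⟩
      have hvv0 : ∀ x : Fin (n + 1), (vv (sigmaA n d 0) x : ℕ)
          = if (x : ℕ) = 0 then s else if (x : ℕ) ≤ d then n + 1 else n := by
        intro x
        show min (((sigmaA n d 0) x : ℕ) + (x : ℕ)) (n + 1) = _
        have h := happly x
        have := x.isLt
        split_ifs at h ⊢ <;> omega
      ext t
      have e1 : (∑ x : Fin (n + 1), if vv (sigmaA n d 0) x = t then (1 : ℕ) else 0)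
          = ∑ x : Fin (n + 1),
              (if (if (x : ℕ) = 0 then s else if (x : ℕ) ≤ d then n + 1 else n) = (t : ℕ)
                then 1 else 0) :=
        Finset.sum_congr rfl (fun x _ => if_congr (by rw [Fin.ext_iff, hvv0 x]) rfl rfl)
      rw [Dex_apply, Finset.card_filter, e1,
        Fin.sum_univ_eq_sum_range
          (fun j => if (if j = 0 then s else if j ≤ d then n + 1 else n) = (t : ℕ)
            then 1 else 0) (n + 1),
        count_sum n s d (t : ℕ) hsd, hνval t, hdd]
  · -- all elements of S have the same sign
    by_cases hcase : s = n
    · refine ⟨Equiv.Perm.sign (Fin.revPerm : Equiv.Perm (Fin (n + 1))), fun σ hσ => ?_⟩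
      obtain ⟨-, hvalid, hD⟩ := Finset.mem_filter.mp hσ
      have hcount : ∀ t, (Finset.univ.filter fun x => vv σ x = t).card = ν t :=
        fun t => by rw [← Dex_apply σ t, hD]
      have htopn : (Finset.univ.filter fun x => vv σ x = p2).card = n + 1 := by
        have h := hcount p2
        rw [hνval p2] at h
        have hv : (p2 : ℕ) = n := rfl
        rw [hv] at h
        split_ifs at h <;> omega
      have hall : (Finset.univ.filter fun x => vv σ x = p2) = Finset.univ :=
        Finset.eq_univ_of_card _ (by rw [htopn, Fintype.card_fin])
      have hre : σ = Fin.revPerm := by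
        apply Equiv.ext
        intro x
        apply Fin.ext
        have hx' : x ∈ Finset.univ.filter (fun y => vv σ y = p2) := by
          rw [hall]; exact Finset.mem_univ x
        have h1 : vv σ x = p2 := (Finset.mem_filter.mp hx').2
        have h2 : min ((σ x : ℕ) + (x : ℕ)) (n + 1) = n := congrArg Fin.val h1
        rw [Fin.revPerm_apply, Fin.val_rev]
        have := x.isLt
        omega
      rw [hre]
    · have hslt : s < n := by omega
      set d := n - s with hdd
      have hsd : s + d = n := by omega
      have hd1 : 1 ≤ d := by omega
      refine ⟨Equiv.Perm.sign (sigmaA n d 0), fun σ hσ => ?_⟩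
      obtain ⟨-, hvalid, hD⟩ := Finset.mem_filter.mp hσ
      have hcount : ∀ t, (Finset.univ.filter fun x => vv σ x = t).card = ν t :=
        fun t => by rw [← Dex_apply σ t, hD]
      have tri : ∀ x : Fin (n + 1), (σ x : ℕ) + (x : ℕ) = s ∨ (σ x : ℕ) + (x : ℕ) = n ∨
          (σ x : ℕ) + (x : ℕ) = n + 1 := by
        intro x
        by_contra hcon
        push_neg at hcon
        obtain ⟨hc1, hc2, hc3⟩ := hcon
        have hx1 : x ∈ Finset.univ.filter (fun y => vv σ y = vv σ x) :=
          Finset.mem_filter.mpr ⟨Finset.mem_univ _, rfl⟩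
        have hpos : 0 < (Finset.univ.filter (fun y => vv σ y = vv σ x)).card :=
          Finset.card_pos.mpr ⟨x, hx1⟩
        have hzero : ν (vv σ x) = 0 := by
          rw [hνval, vv_val (hvalid x)]
          rw [if_neg (by omega), if_neg (by omega), if_neg (by omega)]
        rw [hcount (vv σ x), hzero] at hpos
        omega
      have hνp1 : ν p1 = 1 := by
        rw [hνval p1]
        have hval : (p1 : ℕ) = s := rfl
        rw [hval, if_pos rfl, if_neg (by omega), if_neg (by omega)]
      obtain ⟨aF, haF⟩ := Finset.card_eq_one.mp (by rw [hcount p1, hνp1] :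
        (Finset.univ.filter fun x => vv σ x = p1).card = 1)
      have hamem : aF ∈ Finset.univ.filter (fun x => vv σ x = p1) := by
        rw [haF]; exact Finset.mem_singleton_self _
      have haa : (σ aF : ℕ) + (aF : ℕ) = s := by
        have h := congrArg Fin.val (Finset.mem_filter.mp hamem).2
        rw [vv_val (hvalid aF)] at h
        exact h
      have hauniq : ∀ x : Fin (n + 1), (σ x : ℕ) + (x : ℕ) = s → x = aF := by
        intro x hxs
        have hmem : x ∈ Finset.univ.filter (fun y => vv σ y = p1) :=
          Finset.mem_filter.mpr ⟨Finset.mem_univ _,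
            Fin.ext (by rw [vv_val (hvalid x)]; exact hxs)⟩
        rw [haF] at hmem
        exact Finset.mem_singleton.mp hmem
      have hales : (aF : ℕ) ≤ s := by omega
      have key : ∀ j : ℕ, ∀ hj : j < n + 1,
          (((σ ⟨j, hj⟩ : ℕ) + j = n + 1) ↔ ((aF : ℕ) < j ∧ j ≤ (aF : ℕ) + d)) := by
        intro j
        induction j with
        | zero =>
            intro hj
            constructor
            · intro h0
              have := (σ ⟨0, hj⟩).isLt
              omega
            · rintro ⟨h1, -⟩
              omega
        | succ j IH =>
            intro hj
            have hj' : j < n + 1 := by omega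
            have hIH := IH hj'
            obtain ⟨x, hx⟩ := σ.surjective ⟨n - j, by omega⟩
            have hxval : (σ x : ℕ) = n - j := by rw [hx]
            constructor
            · intro hsucc
              have hσj1 : (σ ⟨j + 1, hj⟩ : ℕ) = n - j := by omega
              rcases tri ⟨j, hj'⟩ with h1 | h2 | h3
              · have hja : (⟨j, hj'⟩ : Fin (n + 1)) = aF := hauniq _ h1
                have hja' : (aF : ℕ) = j := by rw [← hja]
                simp only [Fin.val_mk] at h1
                omega
              · simp only [Fin.val_mk] at h2
                have e1 : σ ⟨j, hj'⟩ = σ ⟨j + 1, hj⟩ := Fin.ext (by omega)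
                have e2 := σ.injective e1
                rw [Fin.ext_iff] at e2
                simp only [Fin.val_mk] at e2
                omega
              · simp only [Fin.val_mk] at h3
                have hr := hIH.mp h3
                refine ⟨by omega, ?_⟩
                by_contra hcon
                have hja : j = (aF : ℕ) + d := by omega
                have e2 : σ aF = σ ⟨j + 1, hj⟩ := Fin.ext (by omega)
                have e3 := σ.injective e2
                rw [Fin.ext_iff] at e3
                simp only [Fin.val_mk] at e3
                omega
            · rintro ⟨hr1, hr2⟩
              rcases tri x with h1 | h2 | h3
              · have hxaF := hauniq x h1
                have hxa : (x : ℕ) = (aF : ℕ) := by rw [hxaF]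
                omega
              · have hxj : (x : ℕ) = j := by omega
                by_cases hja : j = (aF : ℕ)
                · have hxaF : x = aF := Fin.ext (by omega)
                  rw [hxaF] at h2
                  omega
                · have hvj : (σ ⟨j, hj'⟩ : ℕ) + j = n + 1 := hIH.mpr ⟨by omega, by omega⟩
                  have hxfin : x = ⟨j, hj'⟩ := Fin.ext (by simp only [Fin.val_mk]; omega)
                  rw [hxfin] at h2
                  simp only [Fin.val_mk] at h2
                  omega
              · have hxval2 : (x : ℕ) = j + 1 := by omega
                have hxfin : x = ⟨j + 1, hj⟩ := Fin.ext (by simp only [Fin.val_mk]; omega)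
                rw [hxfin] at h3
                simp only [Fin.val_mk] at h3
                exact h3
      have hfin : σ = sigmaA n d (aF : ℕ) := by
        apply Equiv.ext
        intro y
        apply Fin.ext
        rw [sigmaA_apply n s d hsd hd1 (aF : ℕ) hales y]
        have hky := key (y : ℕ) y.isLt
        rw [Fin.eta] at hky
        have hylt := y.isLt
        rcases tri y with h1 | h2 | h3
        · have hy := hauniq y h1
          have hyv : (y : ℕ) = (aF : ℕ) := by rw [hy]
          rw [if_neg (by omega), if_pos hyv]
          omega
        · have hyna : ¬((y : ℕ) = (aF : ℕ)) := by
            intro hc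
            have hc2 : y = aF := Fin.ext hc
            rw [hc2] at h2
            omega
          have hynr : ¬((aF : ℕ) < (y : ℕ) ∧ (y : ℕ) ≤ (aF : ℕ) + d) := by
            intro hr
            have := hky.mpr hr
            omega
          split_ifs <;> omega
        · have hr := hky.mp h3
          rw [if_neg (by omega), if_neg (by omega), if_pos (by omega)]
          omega
      rw [hfin]
      exact sign_sigmaA n d hd1 (aF : ℕ) (by omega)


end Big

end SubHankelAux


open SubHankelAux

/-- For `0 ≤ i ≤ r - 1`, the partial derivatives `∂f^{(r)}/∂x_0,…,∂f^{(r)}/∂x_i`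
lie in the subring `k[x_{r-i},…,x_r]` and their g.c.d. is `x_r^{r-i-1}`. -/
theorem subHankel_pderiv_vars_and_gcd {k : Type*} [Field k] [CharZero k]
    {r : ℕ} (hr : 2 ≤ r) (i : ℕ) (hi : i ≤ r - 1) :
    (∀ j : Fin (r + 1), (j : ℕ) ≤ i →
      ∀ m ∈ (MvPolynomial.pderiv j (subHankelDet k r)).vars, r - i ≤ (m : ℕ)) ∧
    (∀ j : Fin (r + 1), (j : ℕ) ≤ i →
      MvPolynomial.X (Fin.last r) ^ (r - i - 1) ∣
        MvPolynomial.pderiv j (subHankelDet k r)) ∧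
    (∀ g : MvPolynomial (Fin (r + 1)) k,
      (∀ j : Fin (r + 1), (j : ℕ) ≤ i → g ∣ MvPolynomial.pderiv j (subHankelDet k r)) →
      g ∣ MvPolynomial.X (Fin.last r) ^ (r - i - 1)) := by
  classical
  obtain ⟨n, rfl⟩ : ∃ n, r = n + 1 := ⟨r - 1, by omega⟩
  have hn : 1 ≤ n := by omega
  have hi' : i ≤ n := by omega
  -- the key support facts for partial derivatives
  have key : ∀ j : Fin (n + 1 + 1), ∀ m ∈ (pderiv j (subHankelDet k (n + 1))).support,
      (∑ t : Fin (n + 1 + 1), m t) + 1 = n + 1 ∧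
      (∑ t : Fin (n + 1 + 1), (n + 1 - (t : ℕ)) * m t) + (n + 1 - (j : ℕ)) = n + 1 := by
    intro j m hm
    have hne : coeff m (pderiv j (subHankelDet k (n + 1))) ≠ 0 := mem_support_iff.mp hm
    rw [SubHankelAux.coeff_pderiv] at hne
    have hc : coeff (m + Finsupp.single j 1) (subHankelDet k (n + 1)) ≠ 0 :=
      fun h => hne (by rw [h, mul_zero])
    obtain ⟨hdeg, hcw⟩ := support_det_weights (mem_support_iff.mpr hc)
    constructor
    · have h1 := sum_weight_add_single (fun _ : Fin (n + 1 + 1) => 1) m j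
      simp only [one_mul] at h1
      rw [← h1]
      exact hdeg
    · have h1 := sum_weight_add_single (fun t : Fin (n + 1 + 1) => n + 1 - (t : ℕ)) m j
      rw [← h1]
      exact hcw
  refine ⟨?_, ?_, ?_⟩
  · -- variables
    intro j hj m hm
    rw [MvPolynomial.mem_vars] at hm
    obtain ⟨dm, hdm, hmd⟩ := hm
    obtain ⟨hdeg, hcw⟩ := key j dm hdm
    have hm1 : 1 ≤ dm m := by
      have := Finsupp.mem_support_iff.mp hmd
      omega
    have hterm : (n + 1 - (m : ℕ)) * dm m ≤ ∑ t : Fin (n + 1 + 1), (n + 1 - (t : ℕ)) * dm t :=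
      Finset.single_le_sum (f := fun t : Fin (n + 1 + 1) => (n + 1 - (t : ℕ)) * dm t)
        (fun t _ => Nat.zero_le _) (Finset.mem_univ m)
    have hterm2 : (n + 1 - (m : ℕ)) ≤ (n + 1 - (m : ℕ)) * dm m :=
      Nat.le_mul_of_pos_right _ (by omega)
    have hjb := j.isLt
    omega
  · -- divisibility
    intro j hj
    rw [show n + 1 - i - 1 = n - i from by omega, X_pow_eq_monomial]
    refine monomial_one_dvd_iff.mpr (fun m hm => ?_)
    rw [Finsupp.single_le_iff]
    obtain ⟨hdeg, hcw⟩ := key j m hm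
    have hsplit := Finset.add_sum_erase Finset.univ m (Finset.mem_univ (Fin.last (n + 1)))
    have hb1 : (∑ t ∈ Finset.univ.erase (Fin.last (n + 1)), m t)
        ≤ ∑ t ∈ Finset.univ.erase (Fin.last (n + 1)), (n + 1 - (t : ℕ)) * m t := by
      refine Finset.sum_le_sum (fun t ht => ?_)
      have htne : t ≠ Fin.last (n + 1) := Finset.ne_of_mem_erase ht
      have htlt : (t : ℕ) < n + 1 := by
        have h1 := t.isLt
        have h2 : (t : ℕ) ≠ n + 1 := fun hc => htne (Fin.ext (by rw [hc, Fin.val_last]))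
        omega
      exact Nat.le_mul_of_pos_left _ (by omega)
    have hb2 : (∑ t ∈ Finset.univ.erase (Fin.last (n + 1)), (n + 1 - (t : ℕ)) * m t)
        ≤ ∑ t : Fin (n + 1 + 1), (n + 1 - (t : ℕ)) * m t :=
      Finset.sum_le_sum_of_subset (Finset.erase_subset _ _)
    have hjb := j.isLt
    omega
  · -- gcd
    intro g hg
    have hg0 : g ∣ pderiv (0 : Fin (n + 1 + 1)) (subHankelDet k (n + 1)) := hg 0 (by simp)
    set m₀ : Fin (n + 1 + 1) →₀ ℕ := Finsupp.single (Fin.last (n + 1)) n with hm₀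
    have hlast0 : ((0 : Fin (n + 1 + 1)) : ℕ) = 0 := rfl
    have hsub : (pderiv (0 : Fin (n + 1 + 1)) (subHankelDet k (n + 1))).support ⊆ {m₀} := by
      intro m hm
      obtain ⟨hdeg, hcw⟩ := key 0 m hm
      rw [hlast0] at hcw
      have hc0 : (∑ t : Fin (n + 1 + 1), (n + 1 - (t : ℕ)) * m t) = 0 := by omega
      have hzero := Finset.sum_eq_zero_iff.mp hc0
      have hsupp0 : ∀ t : Fin (n + 1 + 1), t ≠ Fin.last (n + 1) → m t = 0 := by
        intro t ht
        have h1 := hzero t (Finset.mem_univ t)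
        have h2 : (t : ℕ) < n + 1 := by
          have := t.isLt
          have : (t : ℕ) ≠ n + 1 := fun hc => ht (Fin.ext (by rw [hc, Fin.val_last]))
          omega
        rcases Nat.mul_eq_zero.mp h1 with h | h
        · omega
        · exact h
      have hmeq : m = Finsupp.single (Fin.last (n + 1)) (m (Fin.last (n + 1))) := by
        ext t
        rw [Finsupp.single_apply]
        split_ifs with h
        · rw [← h]
        · exact hsupp0 t (fun hc => h hc.symm)
      have hrest : (∑ t ∈ Finset.univ.erase (Fin.last (n + 1)), m t) = 0 :=
        Finset.sum_eq_zero (fun t ht => hsupp0 t (Finset.ne_of_mem_erase ht))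
      have hsplit := Finset.add_sum_erase Finset.univ m (Finset.mem_univ (Fin.last (n + 1)))
      have hlast : m (Fin.last (n + 1)) = n := by omega
      rw [Finset.mem_singleton, hmeq, hlast]
    have hmono := eq_monomial_of_support_subset hsub
    set c := coeff m₀ (pderiv (0 : Fin (n + 1 + 1)) (subHankelDet k (n + 1))) with hc
    have hcne : c ≠ 0 := by
      rw [hc, SubHankelAux.coeff_pderiv]
      have h0 : m₀ (0 : Fin (n + 1 + 1)) = 0 := by
        rw [hm₀, Finsupp.single_apply, if_neg]
        intro hcon
        have := congrArg Fin.val hcon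
        rw [Fin.val_last] at this
        simp at this
      rw [h0]
      simp only [zero_add, Nat.cast_one, one_mul]
      have hνeq : m₀ + Finsupp.single (0 : Fin (n + 1 + 1)) 1 =
          Finsupp.single (⟨0, by omega⟩ : Fin (n + 1 + 1)) 1 +
            Finsupp.single (⟨n, by omega⟩ : Fin (n + 1 + 1)) 0 +
            Finsupp.single (⟨n + 1, by omega⟩ : Fin (n + 1 + 1)) (n - 0) := by
        ext t
        simp only [hm₀, Finsupp.add_apply, Finsupp.single_apply, Fin.ext_iff, Fin.val_last,
          Fin.val_zero, Fin.val_mk]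
        split_ifs <;> omega
      rw [hνeq]
      exact coeff_nu_ne_zero n 0 (Nat.zero_le n)
    have hgm : g ∣ monomial m₀ c := by rw [← hmono]; exact hg0
    have hmc : monomial m₀ c = C c * X (Fin.last (n + 1)) ^ n := by
      rw [X_pow_eq_monomial, C_mul_monomial, mul_one]
    have hgX : g ∣ (X (Fin.last (n + 1)) : MvPolynomial (Fin (n + 1 + 1)) k) ^ n := by
      refine (hmc ▸ hgm).trans ⟨C c⁻¹, ?_⟩
      rw [mul_comm, ← mul_assoc, ← C_mul, inv_mul_cancel₀ hcne, C_1, one_mul]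
    have hprime : Prime (X (Fin.last (n + 1)) : MvPolynomial (Fin (n + 1 + 1)) k) :=
      prime_X_fin (n + 1) (Fin.last (n + 1))
    obtain ⟨e, he, hassoc⟩ := (dvd_prime_pow hprime n).mp hgX
    set iF : Fin (n + 1 + 1) := ⟨i, by omega⟩ with hiF
    have hgi : g ∣ pderiv iF (subHankelDet k (n + 1)) := hg iF le_rfl
    have hXe : (X (Fin.last (n + 1)) ^ e : MvPolynomial (Fin (n + 1 + 1)) k)
        ∣ pderiv iF (subHankelDet k (n + 1)) := (hassoc.symm.dvd).trans hgi
    set mstar : Fin (n + 1 + 1) →₀ ℕ :=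
      Finsupp.single (⟨n, by omega⟩ : Fin (n + 1 + 1)) i +
        Finsupp.single (Fin.last (n + 1)) (n - i) with hms
    have hmstar : mstar ∈ (pderiv iF (subHankelDet k (n + 1))).support := by
      rw [mem_support_iff, SubHankelAux.coeff_pderiv]
      have hν : mstar + Finsupp.single iF 1 =
          Finsupp.single (⟨i, by omega⟩ : Fin (n + 1 + 1)) 1 +
            Finsupp.single (⟨n, by omega⟩ : Fin (n + 1 + 1)) i +
            Finsupp.single (⟨n + 1, by omega⟩ : Fin (n + 1 + 1)) (n - i) := by
        ext t
        simp only [hms, hiF, Finsupp.add_apply, Finsupp.single_apply, Fin.ext_iff, Fin.val_last,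
          Fin.val_mk]
        split_ifs <;> omega
      rw [hν]
      exact mul_ne_zero (Nat.cast_ne_zero.mpr (by omega)) (coeff_nu_ne_zero n i hi')
    have hall := monomial_one_dvd_iff.mp (by rw [← X_pow_eq_monomial]; exact hXe) mstar hmstar
    have hle : e ≤ mstar (Fin.last (n + 1)) := Finsupp.single_le_iff.mp hall
    have hmlast : mstar (Fin.last (n + 1)) = n - i := by
      rw [hms, Finsupp.add_apply, Finsupp.single_apply, Finsupp.single_apply,
        if_neg (fun hcon => by
          have := congrArg Fin.val hcon
          rw [Fin.val_last] at this
          simp only [Fin.val_mk] at this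
          omega), if_pos rfl, zero_add]
    rw [show n + 1 - i - 1 = n - i from by omega]
    exact hassoc.dvd.trans (pow_dvd_pow _ (by omega))
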